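/- Let n ≥ 3 and let S_1,...,S_n be a partition of T_{2n} into pairwise isomorphic plane spanning trees with v_iw_i ∈ E(S_i). Then for every i with 2 ≤ i ≤ n−1, the tree S_i contains the edges v_1v_i, v_2v_i, ..., v_{i−1}v_i and the edges w_1w_i, w_2w_i, ..., w_{i−1}w_i. -/
import Mathlib


open SimpleGraph

/-- Two edges of the complete twisted graph cross: writing the edges as `{a,b}` and
`{c,d}` with `a < b` and `c < d` in the linear vertex order, they cross iff
`a < c < d < b` or `c < a < b < d`. -/
def Cross {m : ℕ} (e f : Sym2 (Fin m)) : Prop :=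
  ∃ a b c d : Fin m, a < b ∧ c < d ∧ e = s(a, b) ∧ f = s(c, d) ∧
    ((a < c ∧ d < b) ∨ (c < a ∧ b < d))

/-- A subgraph of the twisted graph is plane if no two of its edges cross. -/
def IsPlane {m : ℕ} (G : SimpleGraph (Fin m)) : Prop :=
  ∀ e ∈ G.edgeSet, ∀ f ∈ G.edgeSet, ¬ Cross e f

/-- A partition of the complete twisted graph `T_{2n}` into plane spanning trees:
`n` plane spanning trees such that every edge of the complete graph lies in
exactly one of them. -/
def IsTwistedPartition {n : ℕ} (S : Fin n → SimpleGraph (Fin (2 * n))) : Prop :=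
  (∀ i, (S i).IsTree ∧ IsPlane (S i)) ∧
    ∀ u v : Fin (2 * n), u ≠ v → ∃! i, (S i).Adj u v

/-- The vertex `v_i` (1-indexed) of `T_{2n}`, i.e. vertex number `i - 1` in the
linear order `v_1 < v_2 < ... < v_n < w_n < ... < w_1`. -/
def vv (n : ℕ) (hn : 0 < n) (i : ℕ) : Fin (2 * n) :=
  ⟨(i - 1) % (2 * n), Nat.mod_lt _ (by omega)⟩

/-- The vertex `w_i` (1-indexed) of `T_{2n}`, i.e. vertex number `2n - i` in the
linear order `v_1 < v_2 < ... < v_n < w_n < ... < w_1`. -/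
def ww (n : ℕ) (hn : 0 < n) (i : ℕ) : Fin (2 * n) :=
  ⟨(2 * n - i) % (2 * n), Nat.mod_lt _ (by omega)⟩

/-! ### Auxiliary material for the main theorem -/

section TwistedAux

open Finset
open scoped Classical

variable {n : ℕ}

/-- The vertex at position `k` (0-indexed) of `T_{2n}`. -/
private def idx (n : ℕ) (hn : 0 < n) (k : ℕ) : Fin (2 * n) :=
  ⟨k % (2 * n), Nat.mod_lt _ (by omega)⟩

private lemma idx_val (hn : 0 < n) {k : ℕ} (hk : k < 2 * n) : (idx n hn k).1 = k :=
  Nat.mod_eq_of_lt hk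

/-- Two nested edges of a plane graph give a contradiction. -/
private lemma no_nest {G : SimpleGraph (Fin (2 * n))} (hp : IsPlane G)
    {u v x y : Fin (2 * n)} (huv : G.Adj u v) (hxy : G.Adj x y)
    (h1 : u < v) (h2 : x < y) (h3 : u < x) (h4 : y < v) : False :=
  hp _ ((SimpleGraph.mem_edgeSet G).2 huv) _ ((SimpleGraph.mem_edgeSet G).2 hxy)
    ⟨u, v, x, y, h1, h2, rfl, rfl, Or.inl ⟨h3, h4⟩⟩

/-- Every vertex has positive degree in every tree. -/
private lemma deg_pos (hn : 0 < n) (S : Fin n → SimpleGraph (Fin (2 * n)))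
    (hS : IsTwistedPartition S) (i : Fin n) (v : Fin (2 * n)) :
    0 < (S i).degree v := by
  rw [SimpleGraph.degree_pos_iff_exists_adj]
  have hne : ∃ w : Fin (2 * n), w ≠ v := by
    rcases Nat.eq_zero_or_pos v.1 with h | h
    · exact ⟨⟨1, by omega⟩, fun hw => by simp [Fin.ext_iff] at hw; omega⟩
    · exact ⟨⟨0, by omega⟩, fun hw => by simp [Fin.ext_iff] at hw; omega⟩
  obtain ⟨w, hw⟩ := hne
  obtain ⟨p⟩ := (hS.1 i).1.isConnected.preconnected v w
  cases p with
  | nil => exact absurd rfl hw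
  | cons h q => exact ⟨_, h⟩

private lemma exists_adj (hn : 0 < n) (S : Fin n → SimpleGraph (Fin (2 * n)))
    (hS : IsTwistedPartition S) (i : Fin n) (v : Fin (2 * n)) :
    ∃ w, (S i).Adj v w :=
  ((S i).degree_pos_iff_exists_adj v).mp (deg_pos hn S hS i v)

/-- A vertex of degree one has a unique neighbour. -/
private lemma deg_one {S : Fin n → SimpleGraph (Fin (2 * n))}
    {i : Fin n} {v x y : Fin (2 * n)} (h : (S i).degree v = 1)
    (hx : (S i).Adj v x) (hy : (S i).Adj v y) : x = y :=
  Finset.card_le_one.mp (le_of_eq h) x (((S i).mem_neighborFinset _ _).2 hx)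
    y (((S i).mem_neighborFinset _ _).2 hy)

/-- Summing the degree of a fixed vertex over all trees gives `2n - 1`. -/
private lemma deg_sum (hn : 0 < n) (S : Fin n → SimpleGraph (Fin (2 * n)))
    (hS : IsTwistedPartition S) (v : Fin (2 * n)) :
    ∑ i, (S i).degree v = 2 * n - 1 := by
  have h1 : ∀ i : Fin n, (S i).degree v
      = ∑ w : Fin (2 * n), if (S i).Adj v w then 1 else 0 := by
    intro i
    rw [← Finset.card_filter]
    show #((S i).neighborFinset v) = _
    congr 1
    ext w
    simp [SimpleGraph.mem_neighborFinset]
  have h2 : ∀ w : Fin (2 * n), w ≠ v →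
      (∑ i : Fin n, if (S i).Adj v w then 1 else 0) = 1 := by
    intro w hw
    obtain ⟨j, hj, hju⟩ := hS.2 v w (Ne.symm hw)
    rw [Finset.sum_eq_single_of_mem j (Finset.mem_univ j)]
    · rw [if_pos hj]
    · intro m _ hm
      rw [if_neg (fun h => hm (hju m h))]
  calc ∑ i, (S i).degree v
      = ∑ i : Fin n, ∑ w : Fin (2 * n), if (S i).Adj v w then 1 else 0 :=
        Finset.sum_congr rfl (fun i _ => h1 i)
    _ = ∑ w : Fin (2 * n), ∑ i : Fin n, if (S i).Adj v w then 1 else 0 :=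
        Finset.sum_comm
    _ = 2 * n - 1 := by
        rw [← Finset.sum_erase_add _ _ (Finset.mem_univ v)]
        have h3 : ∑ i : Fin n, (if (S i).Adj v v then 1 else 0) = 0 := by
          simp
        rw [h3, add_zero, Finset.sum_congr rfl
          (fun w hw => h2 w (Finset.ne_of_mem_erase hw))]
        simp [Finset.card_erase_of_mem]

/-- Structure of each tree: there are two adjacent "centres" of degree `n`,
every other vertex has degree one, and every edge touches a centre. -/
private lemma tree_struct (hn : 0 < n) (S : Fin n → SimpleGraph (Fin (2 * n)))
    (hS : IsTwistedPartition S)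
    (hiso : ∀ i j : Fin n, Nonempty ((S i) ≃g (S j)))
    (hc : ∀ i : Fin n, (S i).Adj (vv n hn (i.1 + 1)) (ww n hn (i.1 + 1)))
    (i : Fin n) :
    ∃ a b : Fin (2 * n), (S i).Adj a b ∧ (S i).degree a = n ∧ (S i).degree b = n ∧
      (∀ v : Fin (2 * n), v ≠ a → v ≠ b → (S i).degree v = 1) ∧
      (∀ u w : Fin (2 * n), (S i).Adj u w → u = a ∨ u = b ∨ w = a ∨ w = b) := by
  set i0 : Fin n := ⟨0, by omega⟩ with hi0
  set z0 : Fin (2 * n) := idx n hn 0 with hz0def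
  set z1 : Fin (2 * n) := idx n hn (2 * n - 1) with hz1def
  have hz0 : z0.1 = 0 := idx_val hn (by omega)
  have hz1 : z1.1 = 2 * n - 1 := idx_val hn (by omega)
  have hz01 : z0 < z1 := by rw [Fin.lt_def, hz0, hz1]; omega
  have hE0 : (S i0).Adj z0 z1 := by
    have h := hc i0
    have h1 : vv n hn (i0.1 + 1) = z0 := by
      apply Fin.ext
      show (i0.1 + 1 - 1) % (2 * n) = z0.1
      rw [hz0]; simp [hi0]
    have h2 : ww n hn (i0.1 + 1) = z1 := by
      apply Fin.ext
      show (2 * n - (i0.1 + 1)) % (2 * n) = z1.1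
      rw [hz1]
      have h3 : 2 * n - (i0.1 + 1) = 2 * n - 1 := by simp [hi0]
      rw [h3, Nat.mod_eq_of_lt (by omega)]
    rw [h1, h2] at h
    exact h
  -- every edge of `S i0` touches `z0` or `z1`
  have cover0 : ∀ u w : Fin (2 * n), (S i0).Adj u w →
      u = z0 ∨ u = z1 ∨ w = z0 ∨ w = z1 := by
    intro u w h
    by_contra hcon
    push_neg at hcon
    obtain ⟨h1, h2, h3, h4⟩ := hcon
    have hu1 : u.1 ≠ 0 := fun h' => h1 (Fin.ext (by rw [hz0, h']))
    have hu2 : u.1 ≠ 2 * n - 1 := fun h' => h2 (Fin.ext (by rw [hz1, h']))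
    have hw1 : w.1 ≠ 0 := fun h' => h3 (Fin.ext (by rw [hz0, h']))
    have hw2 : w.1 ≠ 2 * n - 1 := fun h' => h4 (Fin.ext (by rw [hz1, h']))
    have hub := u.2
    have hwb := w.2
    rcases lt_or_gt_of_ne h.ne with h' | h'
    · exact no_nest (hS.1 i0).2 hE0 h hz01 h'
        (by rw [Fin.lt_def, hz0]; omega) (by rw [Fin.lt_def, hz1]; omega)
    · exact no_nest (hS.1 i0).2 hE0 h.symm hz01 h'
        (by rw [Fin.lt_def, hz0]; omega) (by rw [Fin.lt_def, hz1]; omega)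
  -- each degree in `S i0` is at most `n`
  have hdle : ∀ v : Fin (2 * n), (S i0).degree v ≤ n := by
    intro v
    have hsum := deg_sum hn S hS v
    have hrest : (n - 1) * 1 ≤ ∑ m ∈ Finset.univ.erase i0, (S m).degree v := by
      have h := Finset.card_nsmul_le_sum (Finset.univ.erase i0)
        (fun m => (S m).degree v) 1 (fun m _ => deg_pos hn S hS m v)
      have hcard : (Finset.univ.erase i0).card = n - 1 := by
        rw [Finset.card_erase_of_mem (Finset.mem_univ i0)]
        simp
      rw [hcard] at h
      simpa using h
    have h5 : ∑ m ∈ Finset.univ.erase i0, (S m).degree v + (S i0).degree v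
        = ∑ m, (S m).degree v :=
      Finset.sum_erase_add Finset.univ (fun m => (S m).degree v)
        (Finset.mem_univ i0)
    omega
  -- `deg z0 + deg z1 ≥ 2n`
  have hge : 2 * n ≤ (S i0).degree z0 + (S i0).degree z1 := by
    have hsub : (Finset.univ : Finset (Fin (2 * n))) ⊆
        (S i0).neighborFinset z0 ∪ (S i0).neighborFinset z1 := by
      intro w _
      rw [Finset.mem_union, SimpleGraph.mem_neighborFinset,
        SimpleGraph.mem_neighborFinset]
      by_cases hw0 : w = z0
      · right; rw [hw0]; exact hE0.symm
      by_cases hw1 : w = z1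
      · left; rw [hw1]; exact hE0
      obtain ⟨u, hu⟩ := exists_adj hn S hS i0 w
      rcases cover0 w u hu with h | h | h | h
      · exact absurd h hw0
      · exact absurd h hw1
      · left; rw [h] at hu; exact hu.symm
      · right; rw [h] at hu; exact hu.symm
    have h1 := Finset.card_le_card hsub
    have h2 := Finset.card_union_le ((S i0).neighborFinset z0)
      ((S i0).neighborFinset z1)
    have h3 : (Finset.univ : Finset (Fin (2 * n))).card = 2 * n := by simp
    show 2 * n ≤ #((S i0).neighborFinset z0) + #((S i0).neighborFinset z1)
    omega
  have hdz0 : (S i0).degree z0 = n := by have := hdle z0; have := hdle z1; omega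
  have hdz1 : (S i0).degree z1 = n := by have := hdle z0; have := hdle z1; omega
  -- all other vertices of `S i0` are leaves
  have hsumdeg : ∑ v : Fin (2 * n), (S i0).degree v = 2 * (2 * n - 1) := by
    rw [SimpleGraph.sum_degrees_eq_twice_card_edges]
    have h := (hS.1 i0).1.card_edgeFinset
    simp only [Fintype.card_fin] at h
    omega
  have hleaf0 : ∀ v : Fin (2 * n), v ≠ z0 → v ≠ z1 → (S i0).degree v = 1 := by
    intro v hv0 hv1
    by_contra hne
    have h2le : 2 ≤ (S i0).degree v := by
      have := deg_pos hn S hS i0 v; omega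
    have hz1mem : z1 ∈ Finset.univ.erase z0 := by
      rw [Finset.mem_erase]
      exact ⟨fun h => by rw [Fin.ext_iff, hz1, hz0] at h; omega, Finset.mem_univ _⟩
    have hvs : v ∈ (Finset.univ.erase z0).erase z1 := by
      rw [Finset.mem_erase, Finset.mem_erase]
      exact ⟨hv1, hv0, Finset.mem_univ _⟩
    have hscard : ((Finset.univ.erase z0).erase z1).card = 2 * n - 2 := by
      rw [Finset.card_erase_of_mem hz1mem,
        Finset.card_erase_of_mem (Finset.mem_univ z0)]
      simp only [Finset.card_univ, Fintype.card_fin]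
      omega
    have hs1 : (2 * n - 3) * 1 ≤
        ∑ x ∈ ((Finset.univ.erase z0).erase z1).erase v, (S i0).degree x := by
      have h := Finset.card_nsmul_le_sum (((Finset.univ.erase z0).erase z1).erase v)
        (fun x => (S i0).degree x) 1 (fun x _ => deg_pos hn S hS i0 x)
      rw [Finset.card_erase_of_mem hvs, hscard] at h
      have h23 : 2 * n - 2 - 1 = 2 * n - 3 := by omega
      rw [h23] at h
      simpa using h
    have hs2 : ∑ x ∈ ((Finset.univ.erase z0).erase z1).erase v, (S i0).degree x
        + (S i0).degree v = ∑ x ∈ (Finset.univ.erase z0).erase z1, (S i0).degree x :=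
      Finset.sum_erase_add _ _ hvs
    have hs3 : ∑ x ∈ (Finset.univ.erase z0).erase z1, (S i0).degree x
        + (S i0).degree z1 = ∑ x ∈ Finset.univ.erase z0, (S i0).degree x :=
      Finset.sum_erase_add _ _ hz1mem
    have hs4 : ∑ x ∈ Finset.univ.erase z0, (S i0).degree x + (S i0).degree z0
        = ∑ x, (S i0).degree x :=
      Finset.sum_erase_add _ _ (Finset.mem_univ z0)
    omega
  -- transfer the structure along the isomorphism
  obtain ⟨φ⟩ := hiso i0 i
  have hdegeq : ∀ v : Fin (2 * n), (S i).degree (φ v) = (S i0).degree v := by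
    intro v
    rw [← SimpleGraph.card_neighborSet_eq_degree,
      ← SimpleGraph.card_neighborSet_eq_degree]
    exact Fintype.card_congr (φ.mapNeighborSet v).symm
  refine ⟨φ z0, φ z1, ?_, ?_, ?_, ?_, ?_⟩
  · exact φ.map_adj_iff.mpr hE0
  · rw [hdegeq]; exact hdz0
  · rw [hdegeq]; exact hdz1
  · intro v hva hvb
    have h1 : φ.symm v ≠ z0 := fun h => hva (by rw [← φ.apply_symm_apply v, h])
    have h2 : φ.symm v ≠ z1 := fun h => hvb (by rw [← φ.apply_symm_apply v, h])
    have h3 := hleaf0 (φ.symm v) h1 h2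
    calc (S i).degree v = (S i).degree (φ (φ.symm v)) := by rw [φ.apply_symm_apply]
      _ = (S i0).degree (φ.symm v) := hdegeq _
      _ = 1 := h3
  · intro u w h
    have h' : (S i0).Adj (φ.symm u) (φ.symm w) := φ.symm.map_adj_iff.mpr h
    rcases cover0 _ _ h' with h'' | h'' | h'' | h''
    · exact Or.inl (by rw [← φ.apply_symm_apply u, h''])
    · exact Or.inr (Or.inl (by rw [← φ.apply_symm_apply u, h'']))
    · exact Or.inr (Or.inr (Or.inl (by rw [← φ.apply_symm_apply w, h''])))
    · exact Or.inr (Or.inr (Or.inr (by rw [← φ.apply_symm_apply w, h''])))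

/-- In each tree, every vertex has degree `n` or degree `1`. -/
private lemma deg_cases (hn : 0 < n) (S : Fin n → SimpleGraph (Fin (2 * n)))
    (hS : IsTwistedPartition S)
    (hiso : ∀ i j : Fin n, Nonempty ((S i) ≃g (S j)))
    (hc : ∀ i : Fin n, (S i).Adj (vv n hn (i.1 + 1)) (ww n hn (i.1 + 1)))
    (m : Fin n) (v : Fin (2 * n)) :
    (S m).degree v = n ∨ (S m).degree v = 1 := by
  obtain ⟨a, b, hab, ha, hb, hleaf, hcov⟩ := tree_struct hn S hS hiso hc m
  by_cases h1 : v = a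
  · left; rw [h1]; exact ha
  by_cases h2 : v = b
  · left; rw [h2]; exact hb
  · right; exact hleaf v h1 h2

/-- Every vertex is a centre (degree `n`) of exactly one tree. -/
private lemma center_unique (hn : 0 < n) (hn3 : 3 ≤ n)
    (S : Fin n → SimpleGraph (Fin (2 * n)))
    (hS : IsTwistedPartition S)
    (hiso : ∀ i j : Fin n, Nonempty ((S i) ≃g (S j)))
    (hc : ∀ i : Fin n, (S i).Adj (vv n hn (i.1 + 1)) (ww n hn (i.1 + 1)))
    (v : Fin (2 * n)) :
    ∃! i : Fin n, (S i).degree v = n := by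
  set T : Finset (Fin n) := Finset.univ.filter (fun i => (S i).degree v = n) with hT
  have hsplit := Finset.sum_filter_add_sum_filter_not Finset.univ
    (fun i => (S i).degree v = n) (fun i => (S i).degree v)
  have hTsum : ∑ i ∈ T, (S i).degree v = T.card * n := by
    rw [Finset.sum_congr rfl (fun i hi => (Finset.mem_filter.mp hi).2),
      Finset.sum_const, smul_eq_mul]
  have hFsum : ∑ i ∈ Finset.univ.filter (fun i => ¬ (S i).degree v = n),
      (S i).degree v
      = (Finset.univ.filter (fun i => ¬ (S i).degree v = n)).card := by
    rw [Finset.sum_congr rfl (fun i hi => ?_), Finset.sum_const, smul_eq_mul,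
      mul_one]
    rcases deg_cases hn S hS hiso hc i v with h | h
    · exact absurd h (Finset.mem_filter.mp hi).2
    · exact h
  have hcards := Finset.card_filter_add_card_filter_not
    (s := Finset.univ) (p := fun i => (S i).degree v = n)
  have htot := deg_sum hn S hS v
  have hcu : (Finset.univ : Finset (Fin n)).card = n := by simp
  have hE : T.card * n + ((Finset.univ.filter
      (fun i => ¬ (S i).degree v = n)).card) = 2 * n - 1 := by
    rw [← hTsum, ← hFsum, ← htot, ← hsplit]
  have hTle : T.card ≤ n := by
    have h := Finset.card_filter_le (Finset.univ : Finset (Fin n))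
      (fun i => (S i).degree v = n)
    rw [← hT] at h
    omega
  have hT1 : T.card = 1 := by
    rcases Nat.lt_trichotomy T.card 1 with h | h | h
    · exfalso
      have h0 : T.card = 0 := by omega
      rw [h0] at hE
      simp only [Nat.zero_mul, Nat.zero_add] at hE
      omega
    · exact h
    · exfalso
      have h2 : 2 * n ≤ T.card * n := Nat.mul_le_mul_right n (by omega)
      have h3 : T.card * n ≤ 2 * n - 1 := by
        calc T.card * n ≤ T.card * n + (Finset.univ.filter
            (fun i => ¬ (S i).degree v = n)).card := Nat.le_add_right _ _
          _ = 2 * n - 1 := hE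
      have h4 := h2.trans h3
      omega
  obtain ⟨j, hj⟩ := Finset.card_eq_one.mp hT1
  refine ⟨j, ?_, ?_⟩
  · have hjT : j ∈ T := by rw [hj]; exact Finset.mem_singleton_self j
    exact (Finset.mem_filter.mp hjT).2
  · intro m hm
    have hmT : m ∈ T := Finset.mem_filter.mpr ⟨Finset.mem_univ _, hm⟩
    rw [hj] at hmT
    exact Finset.mem_singleton.mp hmT

set_option maxHeartbeats 1600000 in
/-- The key structural lemma, proved by strong induction: for `I ≤ n - 2`, the
tree whose index has value `I` has centres exactly at positions `I` and
`2n-1-I`, with every position `< I` attached to `I` and every position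
`> 2n-1-I` attached to `2n-1-I`. -/
private lemma tp_key (hn : 0 < n) (hn3 : 3 ≤ n)
    (S : Fin n → SimpleGraph (Fin (2 * n)))
    (hS : IsTwistedPartition S)
    (hiso : ∀ i j : Fin n, Nonempty ((S i) ≃g (S j)))
    (hc : ∀ i : Fin n, (S i).Adj (vv n hn (i.1 + 1)) (ww n hn (i.1 + 1))) :
    ∀ I : ℕ, I ≤ n - 2 → ∀ i : Fin n, i.1 = I →
      (S i).degree (idx n hn I) = n ∧ (S i).degree (idx n hn (2 * n - 1 - I)) = n ∧
      (∀ t, t < I → (S i).Adj (idx n hn t) (idx n hn I) ∧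
        (S i).Adj (idx n hn (2 * n - 1 - t)) (idx n hn (2 * n - 1 - I))) := by
  intro I
  induction I using Nat.strong_induction_on with
  | _ I IH =>
  intro hI i hi
  have hIlt : I < 2 * n := by omega
  have hI2 : 2 * n - 1 - I < 2 * n := by omega
  set zI : Fin (2 * n) := idx n hn I with hzIdef
  set zI' : Fin (2 * n) := idx n hn (2 * n - 1 - I) with hzI'def
  have hzI : zI.1 = I := idx_val hn hIlt
  have hzI' : zI'.1 = 2 * n - 1 - I := idx_val hn hI2
  have hzlt : zI < zI' := by rw [Fin.lt_def, hzI, hzI']; omega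
  have hzne : zI ≠ zI' := ne_of_lt hzlt
  -- the special edge of `S i`
  have hE : (S i).Adj zI zI' := by
    have h := hc i
    have h1 : vv n hn (i.1 + 1) = zI := by
      apply Fin.ext
      show (i.1 + 1 - 1) % (2 * n) = zI.1
      rw [hzI]
      have h' : i.1 + 1 - 1 = I := by omega
      rw [h', Nat.mod_eq_of_lt hIlt]
    have h2 : ww n hn (i.1 + 1) = zI' := by
      apply Fin.ext
      show (2 * n - (i.1 + 1)) % (2 * n) = zI'.1
      rw [hzI']
      have h' : 2 * n - (i.1 + 1) = 2 * n - 1 - I := by omega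
      rw [h', Nat.mod_eq_of_lt hI2]
    rw [h1, h2] at h
    exact h
  -- by induction, outer positions are leaves in every tree other than their own
  have hctr : ∀ t, t < I → ∀ m : Fin n, m.1 ≠ t →
      (S m).degree (idx n hn t) = 1 ∧
      (S m).degree (idx n hn (2 * n - 1 - t)) = 1 := by
    intro t ht m hm
    have htn : t ≤ n - 2 := by omega
    have htn' : t < n := by omega
    obtain ⟨hd1, hd2, _⟩ := IH t ht htn ⟨t, htn'⟩ rfl
    have hu1 := center_unique hn hn3 S hS hiso hc (idx n hn t)
    have hu2 := center_unique hn hn3 S hS hiso hc (idx n hn (2 * n - 1 - t))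
    constructor
    · have hne1 : (S m).degree (idx n hn t) ≠ n := by
        intro h
        obtain ⟨j, _, hjun⟩ := hu1
        have h' : m = ⟨t, htn'⟩ := (hjun m h).trans (hjun ⟨t, htn'⟩ hd1).symm
        exact hm (by rw [h'])
      rcases deg_cases hn S hS hiso hc m (idx n hn t) with h | h
      · exact absurd h hne1
      · exact h
    · have hne2 : (S m).degree (idx n hn (2 * n - 1 - t)) ≠ n := by
        intro h
        obtain ⟨j, _, hjun⟩ := hu2
        have h' : m = ⟨t, htn'⟩ := (hjun m h).trans (hjun ⟨t, htn'⟩ hd2).symm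
        exact hm (by rw [h'])
      rcases deg_cases hn S hS hiso hc m (idx n hn (2 * n - 1 - t)) with h | h
      · exact absurd h hne2
      · exact h
  -- structure of `S i`
  obtain ⟨a, b, hab, hdega, hdegb, hleaf, hcov⟩ := tree_struct hn S hS hiso hc i
  -- centres of `S i` lie in the middle interval
  have hbound : ∀ c : Fin (2 * n), (S i).degree c = n →
      I ≤ c.1 ∧ c.1 ≤ 2 * n - 1 - I := by
    intro c hcdeg
    constructor
    · by_contra h
      push_neg at h
      have hc1 : idx n hn c.1 = c := Fin.ext (idx_val hn c.2)
      have h2 := (hctr c.1 h i (by rw [hi]; omega)).1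
      rw [hc1] at h2
      omega
    · by_contra h
      push_neg at h
      have hcb := c.2
      have ht : 2 * n - 1 - c.1 < I := by omega
      have hc1 : idx n hn (2 * n - 1 - (2 * n - 1 - c.1)) = c :=
        Fin.ext (by rw [idx_val hn (by omega)]; omega)
      have h2 := (hctr (2 * n - 1 - c.1) ht i (by rw [hi]; omega)).2
      rw [hc1] at h2
      omega
  -- middle positions
  have hMidmem : ∀ y : Fin (2 * n), y ∈ Finset.Ioo zI zI' ↔
      (I < y.1 ∧ y.1 < 2 * n - 1 - I) := by
    intro y
    rw [Finset.mem_Ioo, Fin.lt_def, Fin.lt_def, hzI, hzI']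
  have hMidcard : (Finset.Ioo zI zI').card = 2 * n - 2 - 2 * I := by
    rw [Fin.card_Ioo, hzI, hzI']
    omega
  have hplane := (hS.1 i).2
  -- no edge of `S i` joins two strictly-interior positions
  have hnomid : ∀ u w : Fin (2 * n), I < u.1 → u.1 < 2 * n - 1 - I →
      I < w.1 → w.1 < 2 * n - 1 - I → ¬ (S i).Adj u w := by
    intro u w h1 h2 h3 h4 hadj
    rcases lt_or_gt_of_ne hadj.ne with h' | h'
    · exact no_nest hplane hE hadj hzlt h'
        (by rw [Fin.lt_def, hzI]; omega) (by rw [Fin.lt_def, hzI']; omega)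
    · exact no_nest hplane hE hadj.symm hzlt h'
        (by rw [Fin.lt_def, hzI]; omega) (by rw [Fin.lt_def, hzI']; omega)
  -- core counting claim: if one end of the special edge is a centre,
  -- the other end must also be one
  have claimC : ∀ c f : Fin (2 * n), (S i).Adj c f →
      ((c.1 = I ∧ f.1 = 2 * n - 1 - I) ∨ (c.1 = 2 * n - 1 - I ∧ f.1 = I)) →
      (S i).degree c = n → (S i).degree f ≠ n → False := by
    intro c f hCF hcf hdegc hdegf
    have hcval : c.1 = I ∨ c.1 = 2 * n - 1 - I := by
      rcases hcf with ⟨h1, _⟩ | ⟨h1, _⟩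
      exacts [Or.inl h1, Or.inr h1]
    have hfval : f.1 = I ∨ f.1 = 2 * n - 1 - I := by
      rcases hcf with ⟨_, h1⟩ | ⟨_, h1⟩
      exacts [Or.inr h1, Or.inl h1]
    have hcab : c = a ∨ c = b := by
      by_contra hcon
      push_neg at hcon
      have h := hleaf c hcon.1 hcon.2
      omega
    obtain ⟨b', hb'adj, hb'deg, hb'cov, hb'pa, hb'pb⟩ :
        ∃ b' : Fin (2 * n), (S i).Adj c b' ∧ (S i).degree b' = n ∧
          (∀ u w : Fin (2 * n), (S i).Adj u w → u = c ∨ u = b' ∨ w = c ∨ w = b') ∧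
          (a = c ∨ a = b') ∧ (b = c ∨ b = b') := by
      rcases hcab with h | h
      · refine ⟨b, ?_, hdegb, ?_, Or.inl h.symm, Or.inr rfl⟩
        · rw [h]; exact hab
        · intro u w hw
          rcases hcov u w hw with h' | h' | h' | h'
          exacts [Or.inl (h'.trans h.symm), Or.inr (Or.inl h'),
            Or.inr (Or.inr (Or.inl (h'.trans h.symm))), Or.inr (Or.inr (Or.inr h'))]
      · refine ⟨a, ?_, hdega, ?_, Or.inr rfl, Or.inl h.symm⟩
        · rw [h]; exact hab.symm
        · intro u w hw
          rcases hcov u w hw with h' | h' | h' | h'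
          exacts [Or.inr (Or.inl h'), Or.inl (h'.trans h.symm),
            Or.inr (Or.inr (Or.inr h')), Or.inr (Or.inr (Or.inl (h'.trans h.symm)))]
    have hb'nec : c ≠ b' := hb'adj.ne
    have hb'nef : b' ≠ f := fun h => hdegf (h ▸ hb'deg)
    have hb'bnd := hbound b' hb'deg
    have hb'in : I < b'.1 ∧ b'.1 < 2 * n - 1 - I := by
      have h1 : b'.1 ≠ c.1 := fun h => hb'nec (Fin.ext h.symm)
      have h2 : b'.1 ≠ f.1 := fun h => hb'nef (Fin.ext h)
      rcases hcf with ⟨hc1, hf1⟩ | ⟨hc1, hf1⟩ <;> omega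
    have hb'Mid : b' ∈ Finset.Ioo zI zI' := (hMidmem b').mpr hb'in
    -- every middle vertex is adjacent to `c`
    have hmid : ∀ y, y ∈ Finset.Ioo zI zI' → (S i).Adj c y := by
      intro y hy
      by_cases hyb : y = b'
      · rw [hyb]; exact hb'adj
      have hyin := (hMidmem y).mp hy
      have h1 : y ≠ c := fun h => by
        rw [h] at hyin; rcases hcval with h' | h' <;> omega
      have hya : y ≠ a := by
        rcases hb'pa with h | h
        · exact fun h2 => h1 (h2.trans h)
        · exact fun h2 => hyb (h2.trans h)
      have hyb2 : y ≠ b := by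
        rcases hb'pb with h | h
        · exact fun h2 => h1 (h2.trans h)
        · exact fun h2 => hyb (h2.trans h)
      have hdy := hleaf y hya hyb2
      obtain ⟨u, hu⟩ := exists_adj hn S hS i y
      rcases hb'cov y u hu with h | h | h | h
      · exact absurd h h1
      · exact absurd h hyb
      · rw [h] at hu; exact hu.symm
      · exfalso
        rw [h] at hu
        exact hnomid y b' hyin.1 hyin.2 hb'in.1 hb'in.2 hu
    -- counting neighbours of `c` inside `S i`
    have hfN : f ∈ (S i).neighborFinset c := ((S i).mem_neighborFinset _ _).2 hCF
    have hfMid : f ∉ Finset.Ioo zI zI' := by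
      intro h
      have h2 := (hMidmem f).mp h
      rcases hfval with h' | h' <;> omega
    set LR : Finset (Fin (2 * n)) := Finset.Iio zI ∪ Finset.Ioi zI' with hLRdef
    have hLRmem : ∀ x : Fin (2 * n), x ∈ LR ↔ (x.1 < I ∨ 2 * n - 1 - I < x.1) := by
      intro x
      rw [hLRdef, Finset.mem_union, Finset.mem_Iio, Finset.mem_Ioi,
        Fin.lt_def, Fin.lt_def, hzI, hzI']
    have hdisj0 : Disjoint (Finset.Iio zI) (Finset.Ioi zI') := by
      rw [Finset.disjoint_left]
      intro x h1 h2
      rw [Finset.mem_Iio] at h1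
      rw [Finset.mem_Ioi] at h2
      exact absurd (h2.trans h1) (not_lt.mpr (le_of_lt hzlt))
    have hLRcard : LR.card = 2 * I := by
      rw [hLRdef, Finset.card_union_of_disjoint hdisj0, Fin.card_Iio, Fin.card_Ioi,
        hzI, hzI']
      omega
    -- each of the `2I` outer edges at `c` lies in exactly one tree
    have hcount : ∑ m : Fin n, (LR.filter (fun x => (S m).Adj c x)).card = 2 * I := by
      have h1 : ∀ m : Fin n, (LR.filter (fun x => (S m).Adj c x)).card
          = ∑ x ∈ LR, if (S m).Adj c x then 1 else 0 := fun m =>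
        Finset.card_filter _ _
      rw [Finset.sum_congr rfl (fun m _ => h1 m), Finset.sum_comm]
      have h2 : ∀ x ∈ LR, (∑ m : Fin n, if (S m).Adj c x then 1 else 0) = 1 := by
        intro x hx
        have hxv := (hLRmem x).mp hx
        have hcx : c ≠ x := fun h => by
          rw [← h] at hxv; rcases hcval with h' | h' <;> omega
        obtain ⟨j, hj, hju⟩ := hS.2 c x hcx
        rw [Finset.sum_eq_single_of_mem j (Finset.mem_univ j)]
        · rw [if_pos hj]
        · intro m _ hm
          rw [if_neg (fun h => hm (hju m h))]
      rw [Finset.sum_congr rfl h2, Finset.sum_const, smul_eq_mul, mul_one, hLRcard]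
    have hdisj1 : Disjoint (LR.filter (fun x => (S i).Adj c x))
        (insert f (Finset.Ioo zI zI')) := by
      rw [Finset.disjoint_left]
      intro x hx hx2
      have hxv := (hLRmem x).mp (Finset.filter_subset _ _ hx)
      rcases Finset.mem_insert.mp hx2 with h | h
      · rw [h] at hxv; rcases hfval with h' | h' <;> omega
      · have h2 := (hMidmem x).mp h; omega
    have hsub2 : (LR.filter (fun x => (S i).Adj c x)) ∪ insert f (Finset.Ioo zI zI')
        ⊆ (S i).neighborFinset c := by
      intro x hx
      rcases Finset.mem_union.mp hx with h | h
      · exact ((S i).mem_neighborFinset _ _).2 (Finset.mem_filter.mp h).2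
      · rcases Finset.mem_insert.mp h with h' | h'
        · rw [h']; exact hfN
        · exact ((S i).mem_neighborFinset _ _).2 (hmid x h')
    have hkey1 : (LR.filter (fun x => (S i).Adj c x)).card
        + ((Finset.Ioo zI zI').card + 1) ≤ n := by
      have h1 := Finset.card_le_card hsub2
      rw [Finset.card_union_of_disjoint hdisj1,
        Finset.card_insert_of_notMem hfMid] at h1
      have h2 : #((S i).neighborFinset c) = n := hdegc
      omega
    have hconeq : ∀ m : Fin n, m ≠ i → (S m).degree c = 1 := by
      intro m hm
      obtain ⟨j, hj, hju⟩ := center_unique hn hn3 S hS hiso hc c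
      have h1 : (S m).degree c ≠ n := fun h => hm ((hju m h).trans (hju i hdegc).symm)
      rcases deg_cases hn S hS hiso hc m c with h | h
      · exact absurd h h1
      · exact h
    have hzero : ∀ m : Fin n, I < m.1 →
        (LR.filter (fun x => (S m).Adj c x)) = ∅ := by
      intro m hmI
      rw [Finset.filter_eq_empty_iff]
      intro x hx hadj
      have hmne : m ≠ i := fun h => by rw [h, hi] at hmI; omega
      obtain ⟨am, bm, habm, hdam, hdbm, hleafm, hcovm⟩ := tree_struct hn S hS hiso hc m
      have hcm : (S m).degree c = 1 := hconeq m hmne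
      have hxm : (S m).degree x = 1 := by
        rcases (hLRmem x).mp hx with h | h
        · have hxidx : idx n hn x.1 = x := Fin.ext (idx_val hn x.2)
          have h2 := (hctr x.1 h m (by omega)).1
          rw [hxidx] at h2; exact h2
        · have hxb := x.2
          have ht2 : 2 * n - 1 - x.1 < I := by omega
          have hxidx : idx n hn (2 * n - 1 - (2 * n - 1 - x.1)) = x :=
            Fin.ext (by rw [idx_val hn (by omega)]; omega)
          have h2 := (hctr (2 * n - 1 - x.1) ht2 m (by omega)).2
          rw [hxidx] at h2; exact h2
      rcases hcovm c x hadj with h | h | h | h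
      · rw [h] at hcm; omega
      · rw [h] at hcm; omega
      · rw [h] at hxm; omega
      · rw [h] at hxm; omega
    have hone : ∀ m : Fin n, m ≠ i →
        (LR.filter (fun x => (S m).Adj c x)).card ≤ 1 := by
      intro m hm
      have hsub3 : LR.filter (fun x => (S m).Adj c x) ⊆ (S m).neighborFinset c :=
        fun x hx => ((S m).mem_neighborFinset _ _).2 (Finset.mem_filter.mp hx).2
      have h1 := Finset.card_le_card hsub3
      have h2 : #((S m).neighborFinset c) = 1 := hconeq m hm
      omega
    have hsplit2 : ∑ m ∈ Finset.univ.erase i, (LR.filter (fun x => (S m).Adj c x)).card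
        + (LR.filter (fun x => (S i).Adj c x)).card
        = ∑ m : Fin n, (LR.filter (fun x => (S m).Adj c x)).card :=
      Finset.sum_erase_add _ _ (Finset.mem_univ i)
    have herase : ∑ m ∈ Finset.univ.erase i,
        (LR.filter (fun x => (S m).Adj c x)).card ≤ I := by
      have hpt : ∀ m ∈ Finset.univ.erase i,
          (LR.filter (fun x => (S m).Adj c x)).card ≤ if m.1 < I then 1 else 0 := by
        intro m hm
        have hmi := Finset.ne_of_mem_erase hm
        rcases Nat.lt_trichotomy m.1 I with h | h | h
        · rw [if_pos h]; exact hone m hmi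
        · exact absurd (Fin.ext (h.trans hi.symm)) hmi
        · rw [if_neg (by omega), hzero m h]
          simp
      calc ∑ m ∈ Finset.univ.erase i, (LR.filter (fun x => (S m).Adj c x)).card
          ≤ ∑ m ∈ Finset.univ.erase i, if m.1 < I then 1 else 0 :=
            Finset.sum_le_sum hpt
        _ ≤ ∑ m : Fin n, if m.1 < I then 1 else 0 :=
            Finset.sum_le_sum_of_subset (Finset.erase_subset _ _)
        _ = (Finset.univ.filter (fun m : Fin n => m.1 < I)).card :=
            (Finset.card_filter _ _).symm
        _ ≤ I := by
            have h : #(Finset.univ.filter (fun m : Fin n => m.1 < I))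
                ≤ #(Finset.range I) :=
              Finset.card_le_card_of_injOn (fun m : Fin n => m.1)
                (fun m hm => Finset.mem_range.mpr (Finset.mem_filter.mp hm).2)
                (fun x _ y _ h => Fin.ext h)
            simpa using h
    omega
  -- both ends of the special edge are centres of `S i`
  have hdi : (S i).degree zI = n ∧ (S i).degree zI' = n := by
    have h1 : (S i).degree zI = n ∨ (S i).degree zI' = n := by
      rcases hcov zI zI' hE with h | h | h | h
      · left; rw [h]; exact hdega
      · left; rw [h]; exact hdegb
      · right; rw [h]; exact hdega
      · right; rw [h]; exact hdegb
    rcases h1 with h | h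
    · refine ⟨h, ?_⟩
      by_contra h2
      exact claimC zI zI' hE (Or.inl ⟨hzI, hzI'⟩) h h2
    · refine ⟨?_, h⟩
      by_contra h2
      exact claimC zI' zI hE.symm (Or.inr ⟨hzI', hzI⟩) h h2
  have hza : zI = a ∨ zI = b := by
    by_contra h
    push_neg at h
    have h2 := hleaf zI h.1 h.2
    have h3 := hdi.1
    omega
  have hza' : zI' = a ∨ zI' = b := by
    by_contra h
    push_neg at h
    have h2 := hleaf zI' h.1 h.2
    have h3 := hdi.2
    omega
  have hcenters : ∀ u w : Fin (2 * n), (S i).Adj u w →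
      u = zI ∨ u = zI' ∨ w = zI ∨ w = zI' := by
    intro u w h
    rcases hza with h1 | h1 <;> rcases hza' with h2 | h2
    · exact absurd (h1.trans h2.symm) hzne
    · rcases hcov u w h with h' | h' | h' | h'
      exacts [Or.inl (h'.trans h1.symm), Or.inr (Or.inl (h'.trans h2.symm)),
        Or.inr (Or.inr (Or.inl (h'.trans h1.symm))),
        Or.inr (Or.inr (Or.inr (h'.trans h2.symm)))]
    · rcases hcov u w h with h' | h' | h' | h'
      exacts [Or.inr (Or.inl (h'.trans h2.symm)), Or.inl (h'.trans h1.symm),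
        Or.inr (Or.inr (Or.inr (h'.trans h2.symm))),
        Or.inr (Or.inr (Or.inl (h'.trans h1.symm)))]
    · exact absurd (h1.trans h2.symm) hzne
  have hmidleaf : ∀ y : Fin (2 * n), y ∈ Finset.Ioo zI zI' → (S i).degree y = 1 := by
    intro y hy
    have hyv := (hMidmem y).mp hy
    have h1 : y ≠ a := by
      intro h2
      rcases hza with h | h
      · have h3 := congrArg Fin.val (h2.trans h.symm)
        rw [hzI] at h3; omega
      · rcases hza' with h' | h'
        · have h3 := congrArg Fin.val (h2.trans h'.symm)
          rw [hzI'] at h3; omega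
        · exact hzne (h.trans h'.symm)
    have h2 : y ≠ b := by
      intro h2
      rcases hza with h | h
      · rcases hza' with h' | h'
        · exact hzne (h.trans h'.symm)
        · have h3 := congrArg Fin.val (h2.trans h'.symm)
          rw [hzI'] at h3; omega
      · have h3 := congrArg Fin.val (h2.trans h.symm)
        rw [hzI] at h3; omega
    exact hleaf y h1 h2
  refine ⟨hdi.1, hdi.2, ?_⟩
  intro t ht
  have htlt : t < 2 * n := by omega
  have ht2lt : 2 * n - 1 - t < 2 * n := by omega
  set x : Fin (2 * n) := idx n hn t with hxdef
  set x' : Fin (2 * n) := idx n hn (2 * n - 1 - t) with hx'def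
  have hxv : x.1 = t := idx_val hn htlt
  have hx'v : x'.1 = 2 * n - 1 - t := idx_val hn ht2lt
  have hdx : (S i).degree x = 1 := (hctr t ht i (by rw [hi]; omega)).1
  have hdx' : (S i).degree x' = 1 := (hctr t ht i (by rw [hi]; omega)).2
  have hy0lt : I + 1 < 2 * n := by omega
  have hy0v : (idx n hn (I + 1)).1 = I + 1 := idx_val hn hy0lt
  have hy0Mid : idx n hn (I + 1) ∈ Finset.Ioo zI zI' :=
    (hMidmem _).mpr ⟨by rw [hy0v]; omega, by rw [hy0v]; omega⟩
  constructor
  · -- the left outer vertex `x` is attached to `zI`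
    obtain ⟨u, hu⟩ := exists_adj hn S hS i x
    have hxne1 : x ≠ zI := fun h => by
      have h3 := congrArg Fin.val h
      rw [hxv, hzI] at h3; omega
    have hxne2 : x ≠ zI' := fun h => by
      have h3 := congrArg Fin.val h
      rw [hxv, hzI'] at h3; omega
    have hor : u = zI ∨ u = zI' := by
      rcases hcenters x u hu with h | h | h | h
      · exact absurd h hxne1
      · exact absurd h hxne2
      · exact Or.inl h
      · exact Or.inr h
    rcases hor with h | h
    · rw [h] at hu; exact hu
    · exfalso
      rw [h] at hu
      -- all middle vertices attach to `zI'`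
      have hmidR : ∀ y, y ∈ Finset.Ioo zI zI' → (S i).Adj y zI' := by
        intro y hy
        have hyv := (hMidmem y).mp hy
        obtain ⟨w, hw⟩ := exists_adj hn S hS i y
        have hyne1 : y ≠ zI := fun h' => by
          have h3 := congrArg Fin.val h'
          rw [hzI] at h3; omega
        have hyne2 : y ≠ zI' := fun h' => by
          have h3 := congrArg Fin.val h'
          rw [hzI'] at h3; omega
        rcases hcenters y w hw with h' | h' | h' | h'
        · exact absurd h' hyne1
        · exact absurd h' hyne2
        · exfalso
          rw [h'] at hw
          exact no_nest hplane hu hw.symm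
            (by rw [Fin.lt_def, hxv, hzI']; omega)
            (by rw [Fin.lt_def, hzI]; omega)
            (by rw [Fin.lt_def, hxv, hzI]; omega)
            (by rw [Fin.lt_def, hzI']; omega)
        · rw [h'] at hw; exact hw
      have hNsub : (S i).neighborFinset zI ⊆ insert zI' (Finset.Iio zI) := by
        intro w hw
        rw [SimpleGraph.mem_neighborFinset] at hw
        rw [Finset.mem_insert, Finset.mem_Iio]
        by_contra hcon
        push_neg at hcon
        obtain ⟨hw1, hw2⟩ := hcon
        rw [Fin.le_def, hzI] at hw2
        have hwzI : w ≠ zI := hw.ne'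
        have hwv1 : I < w.1 := by
          rcases Nat.eq_or_lt_of_le hw2 with h' | h'
          · exact absurd (Fin.ext (by rw [hzI]; omega)) hwzI
          · exact h'
        have hwv2 : w.1 ≠ 2 * n - 1 - I := fun h' =>
          hw1 (Fin.ext (by rw [hzI']; exact h'))
        rcases Nat.lt_or_ge w.1 (2 * n - 1 - I) with hcase | hcase
        · have hwMid : w ∈ Finset.Ioo zI zI' := (hMidmem w).mpr ⟨hwv1, hcase⟩
          have h1 := hmidR w hwMid
          have h2 := deg_one (hmidleaf w hwMid) h1 hw.symm
          exact hzne h2.symm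
        · have h1 := hmidR _ hy0Mid
          exact no_nest hplane hw h1
            (by rw [Fin.lt_def, hzI]; omega)
            (by rw [Fin.lt_def, hy0v, hzI']; omega)
            (by rw [Fin.lt_def, hzI, hy0v]; omega)
            (by rw [Fin.lt_def, hzI']; omega)
      have hcard := Finset.card_le_card hNsub
      have hnotmem : zI' ∉ Finset.Iio zI := by
        rw [Finset.mem_Iio]
        exact not_lt.mpr (le_of_lt hzlt)
      rw [Finset.card_insert_of_notMem hnotmem, Fin.card_Iio] at hcard
      have h2 : #((S i).neighborFinset zI) = n := hdi.1
      rw [hzI] at hcard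
      omega
  · -- the right outer vertex `x'` is attached to `zI'`
    obtain ⟨u, hu⟩ := exists_adj hn S hS i x'
    have hx'ne1 : x' ≠ zI := fun h => by
      have h3 := congrArg Fin.val h
      rw [hx'v, hzI] at h3; omega
    have hx'ne2 : x' ≠ zI' := fun h => by
      have h3 := congrArg Fin.val h
      rw [hx'v, hzI'] at h3; omega
    have hor : u = zI ∨ u = zI' := by
      rcases hcenters x' u hu with h | h | h | h
      · exact absurd h hx'ne1
      · exact absurd h hx'ne2
      · exact Or.inl h
      · exact Or.inr h
    rcases hor with h | h
    · exfalso
      rw [h] at hu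
      -- all middle vertices attach to `zI`
      have hmidL : ∀ y, y ∈ Finset.Ioo zI zI' → (S i).Adj y zI := by
        intro y hy
        have hyv := (hMidmem y).mp hy
        obtain ⟨w, hw⟩ := exists_adj hn S hS i y
        have hyne1 : y ≠ zI := fun h' => by
          have h3 := congrArg Fin.val h'
          rw [hzI] at h3; omega
        have hyne2 : y ≠ zI' := fun h' => by
          have h3 := congrArg Fin.val h'
          rw [hzI'] at h3; omega
        rcases hcenters y w hw with h' | h' | h' | h'
        · exact absurd h' hyne1
        · exact absurd h' hyne2
        · rw [h'] at hw; exact hw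
        · exfalso
          rw [h'] at hw
          exact no_nest hplane hu.symm hw
            (by rw [Fin.lt_def, hzI, hx'v]; omega)
            (by rw [Fin.lt_def, hzI']; omega)
            (by rw [Fin.lt_def, hzI]; omega)
            (by rw [Fin.lt_def, hzI', hx'v]; omega)
      have hNsub : (S i).neighborFinset zI' ⊆ insert zI (Finset.Ioi zI') := by
        intro w hw
        rw [SimpleGraph.mem_neighborFinset] at hw
        rw [Finset.mem_insert, Finset.mem_Ioi]
        by_contra hcon
        push_neg at hcon
        obtain ⟨hw1, hw2⟩ := hcon
        rw [Fin.le_def, hzI'] at hw2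
        have hwzI' : w ≠ zI' := hw.ne'
        have hwv1 : w.1 < 2 * n - 1 - I := by
          rcases Nat.eq_or_lt_of_le hw2 with h' | h'
          · exact absurd (Fin.ext (by rw [hzI']; omega)) hwzI'
          · exact h'
        have hwv2 : w.1 ≠ I := fun h' => hw1 (Fin.ext (by rw [hzI]; exact h'))
        rcases Nat.lt_or_ge I w.1 with hcase | hcase
        · have hwMid : w ∈ Finset.Ioo zI zI' := (hMidmem w).mpr ⟨hcase, hwv1⟩
          have h1 := hmidL w hwMid
          have h2 := deg_one (hmidleaf w hwMid) h1 hw.symm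
          exact hzne h2
        · have h1 := (hmidL _ hy0Mid).symm
          exact no_nest hplane hw.symm h1
            (by rw [Fin.lt_def, hzI']; omega)
            (by rw [Fin.lt_def, hzI, hy0v]; omega)
            (by rw [Fin.lt_def, hzI]; omega)
            (by rw [Fin.lt_def, hy0v, hzI']; omega)
      have hcard := Finset.card_le_card hNsub
      have hnotmem : zI ∉ Finset.Ioi zI' := by
        rw [Finset.mem_Ioi]
        exact not_lt.mpr (le_of_lt hzlt)
      rw [Finset.card_insert_of_notMem hnotmem, Fin.card_Ioi] at hcard
      have h2 : #((S i).neighborFinset zI') = n := hdi.2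
      rw [hzI'] at hcard
      omega
    · rw [h] at hu; exact hu

end TwistedAux

/-- In any partition of `T_{2n}` into pairwise isomorphic plane spanning trees with
`v_i w_i ∈ E(S_i)`, for `2 ≤ i ≤ n - 1` the tree `S_i` contains the edges
`v_1 v_i, ..., v_{i-1} v_i` and the edges `w_1 w_i, ..., w_{i-1} w_i`.
Here `S_i` is `S ⟨i-1,_⟩`, i.e. the center vertex index of `S i` is `i.1 + 1`. -/
theorem iso_partition_outer_edges
    (n : ℕ) (hn : 0 < n) (hn3 : 3 ≤ n) (S : Fin n → SimpleGraph (Fin (2 * n)))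
    (hS : IsTwistedPartition S)
    (hiso : ∀ i j : Fin n, Nonempty ((S i) ≃g (S j)))
    (hc : ∀ i : Fin n, (S i).Adj (vv n hn (i.1 + 1)) (ww n hn (i.1 + 1))) :
    ∀ i : Fin n, 2 ≤ i.1 + 1 → i.1 + 1 ≤ n - 1 →
      ∀ t : ℕ, 1 ≤ t → t ≤ i.1 →
        (S i).Adj (vv n hn t) (vv n hn (i.1 + 1)) ∧
        (S i).Adj (ww n hn t) (ww n hn (i.1 + 1)) := by
  intro i h2 h3 t ht1 ht2
  have hI : i.1 ≤ n - 2 := by omega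
  obtain ⟨-, -, hL⟩ := tp_key hn hn3 S hS hiso hc i.1 hI i rfl
  have ht : t - 1 < i.1 := by omega
  obtain ⟨hA, hB⟩ := hL (t - 1) ht
  have e1 : vv n hn t = idx n hn (t - 1) := rfl
  have e2 : vv n hn (i.1 + 1) = idx n hn i.1 := by
    apply Fin.ext
    show (i.1 + 1 - 1) % (2 * n) = (idx n hn i.1).1
    rw [idx_val hn (by omega)]
    have h' : i.1 + 1 - 1 = i.1 := by omega
    rw [h', Nat.mod_eq_of_lt (by omega)]
  have e3 : ww n hn t = idx n hn (2 * n - 1 - (t - 1)) := by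
    apply Fin.ext
    show (2 * n - t) % (2 * n) = (idx n hn (2 * n - 1 - (t - 1))).1
    rw [idx_val hn (by omega)]
    have h' : 2 * n - t = 2 * n - 1 - (t - 1) := by omega
    rw [h', Nat.mod_eq_of_lt (by omega)]
  have e4 : ww n hn (i.1 + 1) = idx n hn (2 * n - 1 - i.1) := by
    apply Fin.ext
    show (2 * n - (i.1 + 1)) % (2 * n) = (idx n hn (2 * n - 1 - i.1)).1
    rw [idx_val hn (by omega)]
    have h' : 2 * n - (i.1 + 1) = 2 * n - 1 - i.1 := by omega
    rw [h', Nat.mod_eq_of_lt (by omega)]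
  exact ⟨by rw [e1, e2]; exact hA, by rw [e3, e4]; exact hB⟩
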